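/- Exactly one of the following three cases holds: (i) k = 1, n₊ = n₋, and p₊ = λp₋ for some nonzero scalar λ ∈ ℂ; (ii) k = 2 and r p₊ = −p₊ and r p₋ = −p₋ (i.e., p₊, p₋ ∈ E_1); (iii) k ≥ 2, n₊ = n₋ =: n, and there exist an integer j with 0 < j < k/2 and gcd(j,k) = 1 and an element q ∈ E_j ∩ E^{2n} such that, after rescaling p₊ and p₋ by nonzero complex scalars, p₊ = q − w₊(q) and p₋ = q − w₋(q); moreover in this case dim_ℂ(E_j ∩ E^{2n}) = dim_ℂ(E_{−j} ∩ E^{2n}) = 1. -/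

import Mathlib

set_option linter.unusedSectionVars false
set_option maxHeartbeats 1000000


/-- The `ζ^ℓ`-eigenspace `E_ℓ = ker (r - ζ^ℓ • id)` of a linear map `r`. -/
noncomputable def rEig {E : Type*} [AddCommGroup E] [Module ℂ E]
    (r : E →ₗ[ℂ] E) (ζ : ℂ) (ℓ : ℤ) : Submodule ℂ E :=
  LinearMap.ker (r - ζ ^ ℓ • 1)

/-- Case (i) of the trichotomy: `k = 1`, `n₊ = n₋`, and `p₊` is a nonzero
scalar multiple of `p₋`. -/
def TrichotomyCase1 {E : Type*} [AddCommGroup E] [Module ℂ E]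
    (k nm np : ℕ) (pm pp : E) : Prop :=
  k = 1 ∧ np = nm ∧ ∃ c : ℂ, c ≠ 0 ∧ pp = c • pm

/-- Case (ii) of the trichotomy: `k = 2` and `r p₊ = -p₊`, `r p₋ = -p₋`
(i.e. `p₊, p₋ ∈ E_1`), where `r = w₊ w₋`. -/
def TrichotomyCase2 {E : Type*} [CommRing E] [Algebra ℂ E]
    (k : ℕ) (wm wp : E ≃ₐ[ℂ] E) (pm pp : E) : Prop :=
  k = 2 ∧ wp (wm pp) = -pp ∧ wp (wm pm) = -pm

/-- Case (iii) of the trichotomy: `k ≥ 2`, `n₊ = n₋ = n`, and there are an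
integer `j` with `0 < j < k/2`, `gcd(j,k) = 1`, and `q ∈ E_j ∩ E^{2n}` such
that after rescaling by nonzero scalars `p₊ = q - w₊ q` and `p₋ = q - w₋ q`;
moreover `dim_ℂ (E_j ∩ E^{2n}) = dim_ℂ (E_{-j} ∩ E^{2n}) = 1`. -/
def TrichotomyCase3 {E : Type*} [CommRing E] [Algebra ℂ E]
    (𝒜 : ℕ → Submodule ℂ E) (k nm np : ℕ) (ζ : ℂ)
    (wm wp : E ≃ₐ[ℂ] E) (pm pp : E) : Prop :=
  2 ≤ k ∧ np = nm ∧
  ∃ j : ℕ, 0 < j ∧ 2 * j < k ∧ Nat.gcd j k = 1 ∧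
    ∃ (q : E) (cp cm : ℂ),
      q ∈ 𝒜 (2 * np) ∧
      q ∈ rEig (wp * wm : E ≃ₐ[ℂ] E).toLinearMap ζ (j : ℤ) ∧
      cp ≠ 0 ∧ cm ≠ 0 ∧
      cp • pp = q - wp q ∧ cm • pm = q - wm q ∧
      Module.rank ℂ
        ↥(rEig (wp * wm : E ≃ₐ[ℂ] E).toLinearMap ζ (j : ℤ) ⊓ 𝒜 (2 * np)) = 1 ∧
      Module.rank ℂ
        ↥(rEig (wp * wm : E ≃ₐ[ℂ] E).toLinearMap ζ (-(j : ℤ)) ⊓ 𝒜 (2 * np)) = 1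

namespace Stmt10Aux

lemma pow_mod_of_pow_eq_one {M : Type*} [Monoid M] {g : M} {k : ℕ} (h : g ^ k = 1) (x : ℕ) :
    g ^ (x % k) = g ^ x := by
  conv_rhs => rw [← Nat.mod_add_div x k]
  rw [pow_add, pow_mul, h, one_pow, mul_one]

section Chi

variable {k : ℕ} [NeZero k] {ζ : ℂ}

/-- `ζ ^ t` for `t : ZMod k`. -/
noncomputable def zchi (ζ : ℂ) (t : ZMod k) : ℂ := ζ ^ t.val

variable (hprim : IsPrimitiveRoot ζ k)

include hprim

lemma zchi_natCast (x : ℕ) : zchi ζ (x : ZMod k) = ζ ^ x := by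
  rw [zchi, ZMod.val_natCast, pow_mod_of_pow_eq_one hprim.pow_eq_one]

lemma zchi_add (a b : ZMod k) : zchi ζ (a + b) = zchi ζ a * zchi ζ b := by
  have h1 : ((a.val + b.val : ℕ) : ZMod k) = a + b := by
    push_cast [ZMod.natCast_val, ZMod.cast_id]; ring
  rw [← h1, zchi_natCast hprim, pow_add]; rfl

lemma zchi_zero : zchi ζ (0 : ZMod k) = 1 := by
  have : ((0 : ℕ) : ZMod k) = 0 := by norm_num
  rw [← this, zchi_natCast hprim, pow_zero]

lemma zchi_ne_zero (t : ZMod k) : zchi ζ t ≠ 0 :=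
  pow_ne_zero _ (hprim.ne_zero (NeZero.ne k))

lemma zchi_neg_mul (t : ZMod k) : zchi ζ (-t) * zchi ζ t = 1 := by
  rw [← zchi_add hprim, neg_add_cancel, zchi_zero hprim]

lemma zchi_neg (t : ZMod k) : zchi ζ (-t) = (zchi ζ t)⁻¹ :=
  eq_inv_of_mul_eq_one_left (zchi_neg_mul hprim t)

lemma zchi_eq_one_iff (t : ZMod k) : zchi ζ t = 1 ↔ t = 0 := by
  constructor
  · intro h
    by_contra ht
    have hv : 0 < t.val := by
      rcases Nat.eq_zero_or_pos t.val with h0 | h0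
      · exact absurd ((ZMod.val_eq_zero t).mp h0) ht
      · exact h0
    exact hprim.pow_ne_one_of_pos_of_lt hv.ne' (ZMod.val_lt t) h
  · rintro rfl; exact zchi_zero hprim

lemma sum_zchi_eq_zero {v : ZMod k} (hv : v ≠ 0) : ∑ s : ZMod k, zchi ζ (v * s) = 0 := by
  have h1 : (∑ s : ZMod k, zchi ζ (v * s)) * zchi ζ v = ∑ s : ZMod k, zchi ζ (v * (s + 1)) := by
    rw [Finset.sum_mul]
    refine Finset.sum_congr rfl fun s _ => ?_
    rw [mul_add, mul_one, zchi_add hprim]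
  have h2 : ∑ s : ZMod k, zchi ζ (v * (s + 1)) = ∑ s : ZMod k, zchi ζ (v * s) :=
    Fintype.sum_equiv (Equiv.addRight 1) _ _ (fun s => rfl)
  rw [h2] at h1
  have h3 : (∑ s : ZMod k, zchi ζ (v * s)) * (zchi ζ v - 1) = 0 := by
    rw [mul_sub, h1, mul_one, sub_self]
  rcases mul_eq_zero.mp h3 with h | h
  · exact h
  · exact absurd (by linear_combination h : zchi ζ v = 1) (fun hh => hv ((zchi_eq_one_iff hprim v).mp hh))

lemma sum_zchi_zero : ∑ s : ZMod k, zchi ζ ((0 : ZMod k) * s) = (k : ℂ) := by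
  simp only [zero_mul, zchi_zero hprim]
  simp [ZMod.card]

end Chi


section Chi2
variable {k : ℕ} [NeZero k] {ζ : ℂ} (hprim : IsPrimitiveRoot ζ k)
include hprim

lemma zchi_pow_val (u s : ZMod k) : zchi ζ u ^ s.val = zchi ζ (u * s) := by
  rw [zchi, ← pow_mul, zchi, ZMod.val_mul, pow_mod_of_pow_eq_one hprim.pow_eq_one]

end Chi2

section Pi

variable {E : Type*} [CommRing E] [Algebra ℂ E]
variable {k : ℕ} [NeZero k] {ζ : ℂ}

/-- The eigenprojection onto the `ζ^t` eigenspace of `r`. -/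
noncomputable def piEig (r : E ≃ₐ[ℂ] E) (ζ : ℂ) (t : ZMod k) : E →ₗ[ℂ] E :=
  (k : ℂ)⁻¹ • ∑ s : ZMod k, zchi ζ (-(t * s)) • (r ^ s.val).toLinearMap

lemma piEig_apply (r : E ≃ₐ[ℂ] E) (t : ZMod k) (z : E) :
    piEig r ζ t z = (k:ℂ)⁻¹ • ∑ s : ZMod k, zchi ζ (-(t*s)) • (r ^ s.val) z := by
  simp [piEig, LinearMap.sum_apply, LinearMap.smul_apply]

lemma pow_apply_eig {r : E ≃ₐ[ℂ] E} {z : E} {c : ℂ} (hz : r z = c • z) (n : ℕ) :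
    (r ^ n) z = c ^ n • z := by
  induction n with
  | zero => simp
  | succ n ih =>
    rw [pow_succ, AlgEquiv.mul_apply, hz, map_smul, ih, smul_smul, pow_succ, mul_comm]

lemma pow_apply_succ (r : E ≃ₐ[ℂ] E) (n : ℕ) (z : E) :
    (r ^ (n+1)) z = r ((r ^ n) z) := by
  rw [pow_succ', AlgEquiv.mul_apply]

lemma pow_val_add_one {r : E ≃ₐ[ℂ] E} (hr : r ^ k = 1) (s : ZMod k) :
    r ^ ((s + 1 : ZMod k).val) = r ^ s.val * r := by
  rw [ZMod.val_add, pow_mod_of_pow_eq_one hr, pow_add, ZMod.val_one_eq_one_mod,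
    pow_mod_of_pow_eq_one hr, pow_one]

variable (hprim : IsPrimitiveRoot ζ k)
include hprim

lemma piEig_of_eig (r : E ≃ₐ[ℂ] E) {z : E} {u : ZMod k} (hz : r z = zchi ζ u • z) (t : ZMod k) :
    piEig r ζ t z = if t = u then z else 0 := by
  have hk0 : (k : ℂ) ≠ 0 := Nat.cast_ne_zero.mpr (NeZero.ne k)
  have h1 : ∀ s : ZMod k, zchi ζ (-(t*s)) • ((r ^ s.val) z) = (zchi ζ ((u - t)*s)) • z := by
    intro s
    rw [pow_apply_eig hz, zchi_pow_val hprim, smul_smul, ← zchi_add hprim]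
    congr 1; ring
  rw [piEig_apply, Finset.sum_congr rfl (fun s _ => h1 s), ← Finset.sum_smul]
  by_cases h : t = u
  · subst h
    rw [sub_self, if_pos rfl]
    have : ∀ s : ZMod k, zchi ζ ((0 : ZMod k) * s) = 1 := by
      intro s; rw [zero_mul, zchi_zero hprim]
    rw [Finset.sum_congr rfl (fun s _ => this s)]
    simp [ZMod.card, inv_mul_cancel₀ hk0, smul_smul]
  · have hut : u - t ≠ 0 := sub_ne_zero.mpr (Ne.symm h)
    rw [sum_zchi_eq_zero hprim hut, zero_smul, smul_zero, if_neg h]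

lemma piEig_sum {r : E ≃ₐ[ℂ] E} (hr : r ^ k = 1) (z : E) :
    ∑ t : ZMod k, piEig r ζ t z = z := by
  have hk0 : (k : ℂ) ≠ 0 := Nat.cast_ne_zero.mpr (NeZero.ne k)
  simp_rw [piEig_apply]
  rw [← Finset.smul_sum, Finset.sum_comm]
  have h1 : ∀ s : ZMod k, (∑ t : ZMod k, zchi ζ (-(t*s)) • (r ^ s.val) z)
      = (∑ t : ZMod k, zchi ζ (s * t)) • (r ^ s.val) z := by
    intro s
    rw [Finset.sum_smul]
    refine Fintype.sum_equiv (Equiv.neg _) _ _ fun t => ?_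
    have : -(t * s) = s * (Equiv.neg (ZMod k) t) := by simp; ring
    rw [this]
  rw [Finset.sum_congr rfl (fun s _ => h1 s)]
  have h2 : ∀ s : ZMod k, (∑ t : ZMod k, zchi ζ (s * t)) • (r ^ s.val) z
      = if s = 0 then (k : ℂ) • z else 0 := by
    intro s
    by_cases hs : s = 0
    · subst hs
      have : ∀ t : ZMod k, zchi ζ ((0 : ZMod k) * t) = 1 := by
        intro t; rw [zero_mul, zchi_zero hprim]
      rw [Finset.sum_congr rfl (fun t _ => this t), if_pos rfl]
      simp [ZMod.card]
    · rw [sum_zchi_eq_zero hprim hs, if_neg hs, zero_smul]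
  rw [Finset.sum_congr rfl (fun s _ => h2 s), Finset.sum_ite_eq' Finset.univ (0 : ZMod k)
    (fun _ => (k:ℂ) • z)]
  simp [smul_smul, inv_mul_cancel₀ hk0]

lemma piEig_eig {r : E ≃ₐ[ℂ] E} (hr : r ^ k = 1) (t : ZMod k) (z : E) :
    r (piEig r ζ t z) = zchi ζ t • piEig r ζ t z := by
  rw [piEig_apply, map_smul, map_sum]
  have h1 : ∀ s : ZMod k, r (zchi ζ (-(t*s)) • (r ^ s.val) z)
      = zchi ζ t • (zchi ζ (-(t*(s+1))) • (r ^ ((s+1 : ZMod k)).val) z) := by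
    intro s
    have hx : r ((r ^ s.val) z) = (r ^ ((s+1 : ZMod k)).val) z := by
      rw [pow_val_add_one hr, ← pow_succ, pow_succ', AlgEquiv.mul_apply]
    rw [map_smul, hx, smul_smul, ← zchi_add hprim]
    congr 2; ring
  rw [Finset.sum_congr rfl (fun s _ => h1 s), ← Finset.smul_sum, smul_comm]
  exact congrArg (fun w => zchi ζ t • (k:ℂ)⁻¹ • w) (Fintype.sum_equiv (Equiv.addRight (1 : ZMod k))
    (fun s => zchi ζ (-(t*(s+1))) • (r ^ ((s+1 : ZMod k)).val) z)
    (fun s => zchi ζ (-(t*s)) • (r ^ s.val) z) (fun s => rfl))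

end Pi

section Conj

variable {E : Type*} [CommRing E] [Algebra ℂ E]

lemma invol_apply {w : E ≃ₐ[ℂ] E} (hw : w * w = 1) (x : E) : w (w x) = x := by
  have := congrArg (fun g : E ≃ₐ[ℂ] E => g x) hw
  simpa [AlgEquiv.mul_apply] using this

lemma conj_eig {w r : E ≃ₐ[ℂ] E} (hcomm : w * r = r⁻¹ * w) {z : E} {c : ℂ}
    (hz : r z = c • z) (hc : c ≠ 0) : r (w z) = c⁻¹ • w z := by
  have h1 : r⁻¹ (w z) = c • w z := by
    have h := congrArg (fun g : E ≃ₐ[ℂ] E => g z) hcomm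
    simp only [AlgEquiv.mul_apply] at h
    rw [hz, map_smul] at h
    exact h.symm
  have h2 := congrArg r h1
  rw [map_smul] at h2
  have h3 : r (r⁻¹ (w z)) = w z := by
    have := congrArg (fun g : E ≃ₐ[ℂ] E => g (w z)) (mul_inv_cancel r)
    simpa only [AlgEquiv.mul_apply, AlgEquiv.one_apply] using this
  rw [h3] at h2
  exact ((inv_smul_eq_iff₀ hc).mpr h2).symm

lemma eig_mul {r : E ≃ₐ[ℂ] E} {z y : E} {c d : ℂ} (hz : r z = c • z) (hy : r y = d • y) :
    r (z * y) = (c * d) • (z * y) := by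
  rw [map_mul, hz, hy, smul_mul_smul_comm]

end Conj

section Graded

variable {E : Type*} [CommRing E] [Algebra ℂ E] {𝒜 : ℕ → Submodule ℂ E} [GradedAlgebra 𝒜]

lemma factor_homog {p x c : E} {D e : ℕ} (hp : p ∈ 𝒜 D) (hx : x ∈ 𝒜 e) (heq : x = p * c) :
    x = 0 ∨ (∃ c', c' ∈ 𝒜 (e - D) ∧ x = p * c' ∧ D ≤ e) := by
  by_cases hle : D ≤ e
  · right
    refine ⟨(DirectSum.decompose 𝒜 c (e - D) : E), SetLike.coe_mem _, ?_, hle⟩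
    conv_lhs => rw [← DirectSum.decompose_of_mem_same 𝒜 hx, heq]
    rw [DirectSum.coe_decompose_mul_of_left_mem_of_le 𝒜 hp hle]
  · left
    rw [← DirectSum.decompose_of_mem_same 𝒜 hx, heq]
    rw [DirectSum.coe_decompose_mul_of_left_mem_of_not_le 𝒜 hp hle]

lemma mem_deg0 (h0 : 𝒜 0 = 1) {x : E} (hx : x ∈ 𝒜 0) : ∃ c : ℂ, x = algebraMap ℂ E c := by
  rw [h0] at hx
  obtain ⟨c, hc⟩ := Submodule.mem_one.mp hx
  exact ⟨c, hc.symm⟩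

lemma pow_mem_grading {r : E ≃ₐ[ℂ] E} (hr : ∀ m : ℕ, ∀ x ∈ 𝒜 m, r x ∈ 𝒜 m) (n : ℕ)
    {m : ℕ} {x : E} (hx : x ∈ 𝒜 m) : (r ^ n) x ∈ 𝒜 m := by
  induction n with
  | zero => simpa using hx
  | succ n ih => rw [pow_apply_succ]; exact hr m _ ih

lemma piEig_mem_grading {k : ℕ} [NeZero k] {ζ : ℂ} {r : E ≃ₐ[ℂ] E}
    (hr : ∀ m : ℕ, ∀ x ∈ 𝒜 m, r x ∈ 𝒜 m) (t : ZMod k) {m : ℕ} {z : E} (hz : z ∈ 𝒜 m) :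
    piEig r ζ t z ∈ 𝒜 m := by
  rw [piEig_apply]
  exact Submodule.smul_mem _ _ (Submodule.sum_mem _ fun s _ =>
    Submodule.smul_mem _ _ (pow_mem_grading hr _ hz))

end Graded

section Anti

variable {E : Type*} [CommRing E] [IsDomain E] [Algebra ℂ E]
variable {𝒜 : ℕ → Submodule ℂ E} [GradedAlgebra 𝒜]
variable {w : E ≃ₐ[ℂ] E} {p : E} {n : ℕ}

lemma p_ne_zero (hdec : ∀ a : E, ∃! bc : E × E,
    (w bc.1 = bc.1 ∧ w bc.2 = bc.2) ∧ a = bc.1 + p * bc.2) : p ≠ 0 := by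
  intro h
  obtain ⟨bc, _, hu⟩ := hdec 1
  have h1 := hu (1, 0) ⟨⟨map_one w, map_zero w⟩, by rw [h]; ring⟩
  have h2 := hu (1, 1) ⟨⟨map_one w, map_one w⟩, by rw [h]; ring⟩
  exact zero_ne_one (congrArg Prod.snd (h1.trans h2.symm))

lemma anti_factor (hw : w * w = 1) (hpe : w p = -p)
    (hdec : ∀ a : E, ∃! bc : E × E,
      (w bc.1 = bc.1 ∧ w bc.2 = bc.2) ∧ a = bc.1 + p * bc.2)
    {x : E} (hx : w x = -x) : ∃ c, x = p * c := by
  obtain ⟨⟨b, c⟩, ⟨⟨hb, hc⟩, hxe⟩, -⟩ := hdec x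
  refine ⟨(2:ℂ)⁻¹ • (c + w c), ?_⟩
  have e1 : p * c = x - b := by rw [hxe]; ring
  have e2 : p * w c = x + b := by
    have h := congrArg w hxe
    rw [map_add, map_mul, hb, hpe, hx] at h
    linear_combination h
  rw [mul_smul_comm, mul_add, e1, e2]
  have : x - b + (x + b) = (2:ℂ) • x := by rw [two_smul]; ring
  rw [this, smul_smul, inv_mul_cancel₀ (by norm_num : (2:ℂ) ≠ 0), one_smul]

lemma anti_homog (hw : w * w = 1) (hpe : w p = -p)
    (hdec : ∀ a : E, ∃! bc : E × E,
      (w bc.1 = bc.1 ∧ w bc.2 = bc.2) ∧ a = bc.1 + p * bc.2)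
    (hp : p ∈ 𝒜 (2*n)) {x : E} {e : ℕ} (hx : x ∈ 𝒜 e) (hanti : w x = -x) :
    x = 0 ∨ (∃ c', c' ∈ 𝒜 (e - 2*n) ∧ x = p * c' ∧ 2*n ≤ e) := by
  obtain ⟨c, hc⟩ := anti_factor hw hpe hdec hanti
  exact factor_homog hp hx hc

lemma anti_homog_same_deg (h0 : 𝒜 0 = 1) (hw : w * w = 1) (hpe : w p = -p)
    (hdec : ∀ a : E, ∃! bc : E × E,
      (w bc.1 = bc.1 ∧ w bc.2 = bc.2) ∧ a = bc.1 + p * bc.2)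
    (hp : p ∈ 𝒜 (2*n)) {x : E} (hx : x ∈ 𝒜 (2*n)) (hanti : w x = -x) :
    ∃ l : ℂ, x = l • p := by
  rcases anti_homog hw hpe hdec hp hx hanti with h | ⟨c', hc', hxc, -⟩
  · exact ⟨0, by rw [h, zero_smul]⟩
  · rw [Nat.sub_self] at hc'
    obtain ⟨l, hl⟩ := mem_deg0 h0 hc'
    exact ⟨l, by rw [hxc, hl, mul_comm, ← Algebra.smul_def]⟩

end Anti

section Main

variable {E : Type*} [CommRing E] [IsDomain E] [Algebra ℂ E]
variable {𝒜 : ℕ → Submodule ℂ E} [GradedAlgebra 𝒜]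
variable {k : ℕ} [NeZero k] {ζ : ℂ}

lemma noZeroSMul : NoZeroSMulDivisors ℂ E :=
  ⟨fun {c x} h => by
    rw [Algebra.smul_def, mul_eq_zero] at h
    exact h.imp_left fun h' => (map_eq_zero_iff _ (algebraMap ℂ E).injective).mp h'⟩

/-- The eigen-support of an anti-invariant `p` is a pair `{t₀, -t₀}`. -/
lemma exists_q (hprim : IsPrimitiveRoot ζ k)
    {R w : E ≃ₐ[ℂ] E} (hRk : R ^ k = 1) (hconj : w * R = R⁻¹ * w) (hw : w * w = 1)
    (hRdeg : ∀ m : ℕ, ∀ x ∈ 𝒜 m, R x ∈ 𝒜 m)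
    (h0 : 𝒜 0 = 1) {p : E} {n : ℕ} (hp : p ∈ 𝒜 (2*n)) (hpe : w p = -p)
    (hdec : ∀ a : E, ∃! bc : E × E,
      (w bc.1 = bc.1 ∧ w bc.2 = bc.2) ∧ a = bc.1 + p * bc.2) :
    ∃ (t₀ : ZMod k) (q : E), q ≠ 0 ∧ q ∈ 𝒜 (2*n) ∧ R q = zchi ζ t₀ • q ∧ p = q - w q ∧
      (∀ u : ZMod k, u ≠ t₀ → u ≠ -t₀ → piEig R ζ u p = 0) ∧
      (t₀ ≠ -t₀ → piEig R ζ t₀ p = q ∧ piEig R ζ (-t₀) p = - w q) ∧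
      (t₀ = -t₀ → R p = zchi ζ t₀ • p ∧ w q = -q) := by
  haveI : NoZeroSMulDivisors ℂ E := noZeroSMul
  set a : ZMod k → E := fun u => piEig R ζ u p with ha
  have haA : ∀ u, a u ∈ 𝒜 (2*n) := fun u => piEig_mem_grading hRdeg u hp
  have haE : ∀ u, R (a u) = zchi ζ u • a u := fun u => piEig_eig hprim hRk u p
  have hwa : ∀ u, w (a u) = - a (-u) := by
    intro u
    have h1 : piEig R ζ (-u) (w p) = - a (-u) := by
      rw [hpe, map_neg]
    have h2 : piEig R ζ (-u) (w p) = w (a u) := by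
      have hwp : w p = ∑ t : ZMod k, w (a t) := by
        rw [← map_sum, piEig_sum hprim hRk]
      rw [hwp, map_sum]
      have h3 : ∀ t : ZMod k, piEig R ζ (-u) (w (a t)) = if t = u then w (a t) else 0 := by
        intro t
        have he : R (w (a t)) = zchi ζ (-t) • w (a t) := by
          rw [zchi_neg hprim]
          exact conj_eig hconj (haE t) (zchi_ne_zero hprim t)
        rw [piEig_of_eig hprim _ he]
        exact if_congr (by rw [neg_inj, eq_comm]) rfl rfl
      rw [Finset.sum_congr rfl (fun t _ => h3 t)]
      simp
    rw [← h2, h1]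
  have hpsum : ∑ t : ZMod k, a t = p := piEig_sum hprim hRk p
  have hp0 : p ≠ 0 := p_ne_zero hdec
  have hexist : ∃ t₀, a t₀ ≠ 0 := by
    by_contra h
    push_neg at h
    exact hp0 (by rw [← hpsum]; exact Finset.sum_eq_zero fun t _ => h t)
  obtain ⟨t₀, ht₀⟩ := hexist
  have hb_anti : w (a t₀ + a (-t₀)) = -(a t₀ + a (-t₀)) := by
    rw [map_add, hwa, hwa, neg_neg]; ring
  obtain ⟨l, hl⟩ := anti_homog_same_deg h0 hw hpe hdec hp (add_mem (haA _) (haA _)) hb_anti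
  have hproj : ∀ u, piEig R ζ u (a t₀ + a (-t₀)) = l • a u := by
    intro u; rw [hl, map_smul]
  have hat : piEig R ζ t₀ (a t₀ + a (-t₀))
      = a t₀ + (if t₀ = -t₀ then a (-t₀) else 0) := by
    rw [map_add, piEig_of_eig hprim _ (haE t₀) t₀, if_pos rfl,
      piEig_of_eig hprim _ (haE (-t₀)) t₀]
  have hl0 : l ≠ 0 := by
    intro h
    have h1 : piEig R ζ t₀ (a t₀ + a (-t₀)) = 0 := by rw [hproj t₀, h, zero_smul]
    rw [hat] at h1
    by_cases hsp : t₀ = -t₀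
    · rw [if_pos hsp] at h1
      have : a (-t₀) = a t₀ := by rw [← hsp]
      rw [this, ← two_smul ℂ] at h1
      exact ht₀ ((smul_eq_zero_iff_right (by norm_num : (2:ℂ) ≠ 0)).mp h1)
    · rw [if_neg hsp, add_zero] at h1
      exact ht₀ h1
  have hvanish : ∀ u, u ≠ t₀ → u ≠ -t₀ → a u = 0 := by
    intro u h1 h2
    have h3 := hproj u
    rw [map_add, piEig_of_eig hprim _ (haE t₀) u, if_neg h1,
      piEig_of_eig hprim _ (haE (-t₀)) u, if_neg h2, add_zero] at h3
    exact (smul_eq_zero_iff_right hl0).mp h3.symm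
  by_cases hsp : t₀ = -t₀
  · -- self-paired case : q = (1/2) a t₀
    have hpa : p = a t₀ := by
      rw [← hpsum]
      exact Finset.sum_eq_single t₀
        (fun u _ hu => hvanish u hu (by rw [← hsp]; exact hu)) (by simp)
    have hwq : w ((2:ℂ)⁻¹ • a t₀) = -((2:ℂ)⁻¹ • a t₀) := by
      rw [map_smul, hwa, ← hsp, smul_neg]
    refine ⟨t₀, (2:ℂ)⁻¹ • a t₀, ?_, Submodule.smul_mem _ _ (haA _), ?_, ?_, ?_, ?_, ?_⟩
    · simp only [ne_eq, smul_eq_zero, inv_eq_zero, OfNat.ofNat_ne_zero, false_or]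
      exact ht₀
    · rw [map_smul, haE, smul_comm]
    · rw [hwq, sub_neg_eq_add, ← two_smul ℂ, smul_smul,
        mul_inv_cancel₀ (by norm_num : (2:ℂ) ≠ 0), one_smul, hpa]
    · exact hvanish
    · intro h; exact absurd hsp h
    · intro _
      constructor
      · rw [hpa]; exact haE t₀
      · exact hwq
  · -- generic case : q = a t₀
    have hpa : p = a t₀ + a (-t₀) := by
      rw [← hpsum]
      have hsub : ({t₀, -t₀} : Finset (ZMod k)) ⊆ Finset.univ := Finset.subset_univ _
      rw [← Finset.sum_subset hsub (fun x _ hx => by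
        rw [Finset.mem_insert, Finset.mem_singleton] at hx
        push_neg at hx
        exact hvanish x hx.1 hx.2)]
      rw [Finset.sum_pair hsp]
    have haneg : a (-t₀) = - w (a t₀) := by rw [hwa, neg_neg]
    refine ⟨t₀, a t₀, ht₀, haA _, haE _, ?_, hvanish, ?_, fun h => absurd h hsp⟩
    · rw [hpa, haneg]; ring
    · exact fun _ => ⟨rfl, haneg.symm ▸ rfl⟩

lemma dvd_val_neg {d : ℕ} (hdk : d ∣ k) {t : ZMod k} (h : d ∣ t.val) : d ∣ (-t).val := by
  rw [ZMod.neg_val]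
  split
  · exact Dvd.intro 0 rfl
  · exact Nat.dvd_sub hdk h

lemma dvd_val_add {d : ℕ} (hdk : d ∣ k) {a b : ZMod k} (ha : d ∣ a.val) (hb : d ∣ b.val) :
    d ∣ (a + b).val := by
  rw [ZMod.val_add]
  exact (Nat.dvd_mod_iff hdk).mpr (dvd_add ha hb)

/-- Descent: if `p` is concentrated in a self-paired eigenvalue `l0`, then all
non-self-paired eigenspaces vanish (in every degree). -/
lemma descent (hprim : IsPrimitiveRoot ζ k)
    {R w : E ≃ₐ[ℂ] E} (hRk : R ^ k = 1) (hconj : w * R = R⁻¹ * w) (hw : w * w = 1)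
    (hRdeg : ∀ m : ℕ, ∀ x ∈ 𝒜 m, R x ∈ 𝒜 m) (hwdeg : ∀ m : ℕ, ∀ x ∈ 𝒜 m, w x ∈ 𝒜 m)
    (h0 : 𝒜 0 = 1) {p : E} {n : ℕ} (hp : p ∈ 𝒜 (2*n)) (hn : 1 ≤ n) (hpe : w p = -p)
    (hdec : ∀ a : E, ∃! bc : E × E,
      (w bc.1 = bc.1 ∧ w bc.2 = bc.2) ∧ a = bc.1 + p * bc.2)
    {l0 : ZMod k} (hpeig : R p = zchi ζ l0 • p) (hl0 : l0 = -l0) :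
    ∀ D : ℕ, ∀ t : ZMod k, t ≠ -t → ∀ z ∈ 𝒜 D, R z = zchi ζ t • z → z = 0 := by
  intro D
  induction D using Nat.strong_induction_on with
  | _ D IH =>
    intro t ht z hzA hzE
    have hy_anti : w (z - w z) = -(z - w z) := by
      rw [map_sub, invol_apply hw]; ring
    have hyA : z - w z ∈ 𝒜 D := sub_mem hzA (hwdeg D z hzA)
    have hwz : R (w z) = zchi ζ (-t) • w z := by
      rw [zchi_neg hprim]
      exact conj_eig hconj hzE (zchi_ne_zero hprim t)
    have hπ : piEig R ζ t (z - w z) = z := by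
      rw [map_sub, piEig_of_eig hprim _ hzE, if_pos rfl, piEig_of_eig hprim _ hwz,
        if_neg ht, sub_zero]
    rcases anti_homog hw hpe hdec hp hyA hy_anti with h | ⟨c, hcA, hyc, hD⟩
    · rw [← hπ, h, map_zero]
    · have hz_eq : z = p * piEig R ζ (t - l0) c := by
        rw [← hπ, hyc]
        conv_lhs => rw [(piEig_sum hprim hRk c).symm]
        rw [Finset.mul_sum, map_sum]
        have hterm : ∀ j : ZMod k, piEig R ζ t (p * piEig R ζ j c)
            = if j = t - l0 then p * piEig R ζ j c else 0 := by
          intro j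
          have he := eig_mul hpeig (piEig_eig hprim hRk j c)
          rw [← zchi_add hprim] at he
          rw [piEig_of_eig hprim _ he]
          exact if_congr ⟨fun h => by rw [h]; ring, fun h => by rw [h]; ring⟩ rfl rfl
        rw [Finset.sum_congr rfl fun j _ => hterm j,
          Finset.sum_ite_eq' Finset.univ (t - l0) (fun j => p * piEig R ζ j c)]
        simp
      by_contra hz0
      have hc0 : piEig R ζ (t - l0) c ≠ 0 := by
        intro h; rw [h, mul_zero] at hz_eq; exact hz0 hz_eq
      have hindep : (t - l0) ≠ -(t - l0) := by
        intro h; exact ht (by linear_combination h + hl0)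
      have hlt : D - 2*n < D := by omega
      exact hc0 (IH (D - 2*n) hlt (t - l0) hindep _ (piEig_mem_grading hRdeg _ hcA)
        (piEig_eig hprim hRk _ c))

/-- If `p` is supported in `{s0, -s0}` with `d ∣ s0.val` and all eigencomponents of `c`
are supported on divisible values, then `π_t (p * c) = 0` for `d ∤ t.val`. -/
lemma prod_proj_zero (hprim : IsPrimitiveRoot ζ k) {R : E ≃ₐ[ℂ] E} (hRk : R ^ k = 1)
    {p c : E} {t : ZMod k} {d : ℕ} (hdk : d ∣ k) (hdt : ¬ d ∣ t.val)
    {s0 : ZMod k} (hs0 : d ∣ s0.val)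
    (hvp : ∀ u : ZMod k, u ≠ s0 → u ≠ -s0 → piEig R ζ u p = 0)
    (hcd : ∀ j : ZMod k, ¬ d ∣ j.val → piEig R ζ j c = 0) :
    piEig R ζ t (p * c) = 0 := by
  conv_lhs => rw [(piEig_sum hprim hRk p).symm, (piEig_sum hprim hRk c).symm]
  rw [Finset.sum_mul_sum, map_sum]
  refine Finset.sum_eq_zero fun i _ => ?_
  rw [map_sum]
  refine Finset.sum_eq_zero fun j _ => ?_
  by_cases hi : piEig R ζ i p = 0
  · rw [hi, zero_mul, map_zero]
  by_cases hj : piEig R ζ j c = 0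
  · rw [hj, mul_zero, map_zero]
  have hdi : d ∣ i.val := by
    by_cases h1 : i = s0
    · rw [h1]; exact hs0
    by_cases h2 : i = -s0
    · rw [h2]; exact dvd_val_neg hdk hs0
    · exact absurd (hvp i h1 h2) hi
  have hdj : d ∣ j.val := by
    by_contra h
    exact hj (hcd j h)
  have he := eig_mul (piEig_eig hprim hRk i p) (piEig_eig hprim hRk j c)
  rw [← zchi_add hprim] at he
  rw [piEig_of_eig hprim _ he, if_neg]
  intro h
  rw [h] at hdt
  exact hdt (dvd_val_add hdk hdi hdj)

/-- The support-divisibility lemma : all eigenvalues occurring in `E` have values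
divisible by `d`, where `d` divides the (values of) the supports of `pm` and `pp`. -/
lemma support_dvd (hprim : IsPrimitiveRoot ζ k)
    {wm wp : E ≃ₐ[ℂ] E} {R : E ≃ₐ[ℂ] E} (hRdef : R = wp * wm)
    (hRk : R ^ k = 1) (hconjm : wm * R = R⁻¹ * wm) (hconjp : wp * R = R⁻¹ * wp)
    (hm : wm * wm = 1) (hp : wp * wp = 1)
    (hRdeg : ∀ m : ℕ, ∀ x ∈ 𝒜 m, R x ∈ 𝒜 m)
    (hmdeg : ∀ m : ℕ, ∀ x ∈ 𝒜 m, wm x ∈ 𝒜 m) (hpdeg : ∀ m : ℕ, ∀ x ∈ 𝒜 m, wp x ∈ 𝒜 m)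
    (h0 : 𝒜 0 = 1) {pm pp : E} {nm np : ℕ}
    (hpm : pm ∈ 𝒜 (2*nm)) (hpp : pp ∈ 𝒜 (2*np)) (hnm : 1 ≤ nm) (hnp : 1 ≤ np)
    (hpme : wm pm = -pm) (hppe : wp pp = -pp)
    (hdm : ∀ a : E, ∃! bc : E × E,
      (wm bc.1 = bc.1 ∧ wm bc.2 = bc.2) ∧ a = bc.1 + pm * bc.2)
    (hdp : ∀ a : E, ∃! bc : E × E,
      (wp bc.1 = bc.1 ∧ wp bc.2 = bc.2) ∧ a = bc.1 + pp * bc.2)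
    {d : ℕ} (hdk : d ∣ k) {l0 m0 : ZMod k} (hl0d : d ∣ l0.val) (hm0d : d ∣ m0.val)
    (hvm : ∀ u : ZMod k, u ≠ l0 → u ≠ -l0 → piEig R ζ u pm = 0)
    (hvp : ∀ u : ZMod k, u ≠ m0 → u ≠ -m0 → piEig R ζ u pp = 0) :
    ∀ D : ℕ, ∀ t : ZMod k, ¬ d ∣ t.val → ∀ z ∈ 𝒜 D, R z = zchi ζ t • z → z = 0 := by
  intro D
  induction D using Nat.strong_induction_on with
  | _ D IH =>
    intro t hdt z hzA hzE
    -- the `wm` side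
    have hπm : piEig R ζ t (z - wm z) = 0 := by
      have hy_anti : wm (z - wm z) = -(z - wm z) := by
        rw [map_sub, invol_apply hm]; ring
      have hyA : z - wm z ∈ 𝒜 D := sub_mem hzA (hmdeg D z hzA)
      rcases anti_homog hm hpme hdm hpm hyA hy_anti with h | ⟨c, hcA, hyc, hD⟩
      · rw [h, map_zero]
      · rw [hyc]
        refine prod_proj_zero hprim hRk hdk hdt hl0d hvm fun j hjd => ?_
        have hlt : D - 2*nm < D := by omega
        exact IH (D - 2*nm) hlt j hjd _ (piEig_mem_grading hRdeg _ hcA)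
          (piEig_eig hprim hRk _ c)
    -- the `wp` side
    have hπp : piEig R ζ t (z - wp z) = 0 := by
      have hy_anti : wp (z - wp z) = -(z - wp z) := by
        rw [map_sub, invol_apply hp]; ring
      have hyA : z - wp z ∈ 𝒜 D := sub_mem hzA (hpdeg D z hzA)
      rcases anti_homog hp hppe hdp hpp hyA hy_anti with h | ⟨c, hcA, hyc, hD⟩
      · rw [h, map_zero]
      · rw [hyc]
        refine prod_proj_zero hprim hRk hdk hdt hm0d hvp fun j hjd => ?_
        have hlt : D - 2*np < D := by omega
        exact IH (D - 2*np) hlt j hjd _ (piEig_mem_grading hRdeg _ hcA)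
          (piEig_eig hprim hRk _ c)
    have hwmz : R (wm z) = zchi ζ (-t) • wm z := by
      rw [zchi_neg hprim]
      exact conj_eig hconjm hzE (zchi_ne_zero hprim t)
    have hwpz : R (wp z) = zchi ζ (-t) • wp z := by
      rw [zchi_neg hprim]
      exact conj_eig hconjp hzE (zchi_ne_zero hprim t)
    by_cases hts : t = -t
    · -- self-paired : both `wm z = z` and `wp z = z`, so `R z = z`
      have h1 : z - wm z = 0 := by
        rw [← hπm, map_sub, piEig_of_eig hprim _ hzE, if_pos rfl,
          piEig_of_eig hprim _ hwmz, if_pos hts]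
      have h2 : z - wp z = 0 := by
        rw [← hπp, map_sub, piEig_of_eig hprim _ hzE, if_pos rfl,
          piEig_of_eig hprim _ hwpz, if_pos hts]
      have hRz : R z = z := by
        have := congrArg (fun g : E ≃ₐ[ℂ] E => g z) hRdef
        simp only [AlgEquiv.mul_apply] at this
        rw [this, show wm z = z from (sub_eq_zero.mp h1).symm,
          show wp z = z from (sub_eq_zero.mp h2).symm]
      rw [hRz] at hzE
      have hkey : (zchi ζ t - 1) • z = 0 := by
        rw [sub_smul, one_smul, ← hzE, sub_self]
      haveI : NoZeroSMulDivisors ℂ E := noZeroSMul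
      rcases smul_eq_zero.mp hkey with h | h
      · exfalso
        have ht1 : zchi ζ t = 1 := by linear_combination h
        have ht0 : t = 0 := (zchi_eq_one_iff hprim t).mp ht1
        rw [ht0] at hdt
        simp at hdt
      · exact h
    · -- not self-paired : `π_t (z - wm z) = z`
      rw [map_sub, piEig_of_eig hprim _ hzE, if_pos rfl,
        piEig_of_eig hprim _ hwmz, if_neg hts, sub_zero] at hπm
      exact hπm

/-- A dihedral-type group generated by two involutions with `(wp*wm)^s = 1` has at
most `2*s` elements. -/
lemma card_closure_le {wm wp : E ≃ₐ[ℂ] E} (hm : wm * wm = 1) (hp : wp * wp = 1)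
    {s : ℕ} (hs0 : 0 < s) (hs : (wp * wm) ^ s = 1) :
    Nat.card ↥(Subgroup.closure ({wm, wp} : Set (E ≃ₐ[ℂ] E))) ≤ 2 * s := by
  haveI : NeZero s := ⟨hs0.ne'⟩
  set G := Subgroup.closure ({wm, wp} : Set (E ≃ₐ[ℂ] E)) with hG
  set R := wp * wm with hR
  have hwmG : wm ∈ G := Subgroup.subset_closure (by simp)
  have hwpG : wp ∈ G := Subgroup.subset_closure (by simp)
  have hRG : R ∈ G := mul_mem hwpG hwmG
  have hwminv : wm⁻¹ = wm := inv_eq_of_mul_eq_one_right hm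
  have hRinv : R⁻¹ = wm * wp := by
    apply inv_eq_of_mul_eq_one_right
    rw [hR, mul_assoc, ← mul_assoc wm wm, hm, one_mul, hp]
  have hsemi : SemiconjBy wm R R⁻¹ := by
    show wm * R = R⁻¹ * wm
    rw [hRinv, hR, mul_assoc]
  have hzc : ∀ i : ℤ, wm * R ^ i = R ^ (-i) * wm := by
    intro i
    have h1 := hsemi.zpow_right i
    rw [inv_zpow, ← zpow_neg] at h1
    exact h1
  have hmem : ∀ g ∈ G, ∃ (i : ℤ) (b : Bool), g = R ^ i * (cond b wm 1) := by
    intro g hg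
    induction hg using Subgroup.closure_induction with
    | mem x hx =>
      rcases hx with h | h
      · exact ⟨0, true, by simp [h]⟩
      · refine ⟨1, true, ?_⟩
        simp only [Set.mem_singleton_iff] at h
        rw [h, zpow_one, hR, cond, mul_assoc, hm, mul_one]
    | one => exact ⟨0, false, by simp⟩
    | mul x y hx hy ihx ihy =>
      obtain ⟨i, b, rfl⟩ := ihx
      obtain ⟨j, b', rfl⟩ := ihy
      cases b
      · exact ⟨i + j, b', by rw [zpow_add]; cases b' <;> simp [mul_assoc]⟩
      · refine ⟨i - j, !b', ?_⟩
        cases b'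
        · simp only [cond, Bool.not_false]
          rw [mul_one, mul_assoc, hzc, ← mul_assoc, ← zpow_add, ← sub_eq_add_neg]
        · simp only [cond, Bool.not_true]
          rw [mul_assoc, ← mul_assoc wm (R ^ j) wm, hzc, mul_assoc (R ^ (-j)) wm wm, hm,
            mul_one, ← zpow_add, ← sub_eq_add_neg, mul_one]
    | inv x hx ihx =>
      obtain ⟨i, b, rfl⟩ := ihx
      cases b
      · exact ⟨-i, false, by simp⟩
      · refine ⟨i, true, ?_⟩
        simp only [cond, mul_inv_rev, hwminv]
        rw [← zpow_neg, hzc, neg_neg]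
  have hfin : ∀ i : ℤ, ∃ n : ZMod s, R ^ i = R ^ (n.val : ℕ) := by
    intro i
    refine ⟨(i : ZMod s), ?_⟩
    have h1 : i = (s : ℤ) * (i / s) + i % s := (Int.mul_ediv_add_emod i s).symm
    have h2 : R ^ i = R ^ (i % (s:ℤ)) := by
      conv_lhs => rw [h1]
      rw [zpow_add, zpow_mul, zpow_natCast, hs, one_zpow, one_mul]
    rw [h2, ← ZMod.val_intCast i, zpow_natCast]
  have hsurj : Function.Surjective (fun x : ZMod s × Bool =>
      (⟨R ^ (x.1.val) * (cond x.2 wm 1), mul_mem (pow_mem hRG _)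
        (by cases x.2 <;> simp [hwmG, one_mem])⟩ : G)) := by
    rintro ⟨g, hg⟩
    obtain ⟨i, b, hgi⟩ := hmem g hg
    obtain ⟨n, hn⟩ := hfin i
    exact ⟨(n, b), Subtype.ext (by simp only [hgi, hn])⟩
  calc Nat.card ↥G ≤ Nat.card (ZMod s × Bool) := Nat.card_le_card_of_surjective _ hsurj
    _ = 2 * s := by
        rw [Nat.card_prod, Nat.card_eq_fintype_card, Nat.card_eq_fintype_card, ZMod.card]
        simp [mul_comm]

lemma zchi_selfpair (hprim : IsPrimitiveRoot ζ k) {t : ZMod k} (ht : t = -t) (ht0 : t ≠ 0) :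
    zchi ζ t = -1 := by
  have h2 : zchi ζ t * zchi ζ t = 1 := by
    nth_rewrite 1 [ht]
    rw [zchi_neg_mul hprim]
  have h3 : (zchi ζ t - 1) * (zchi ζ t + 1) = 0 := by linear_combination h2
  rcases mul_eq_zero.mp h3 with h | h
  · exfalso
    exact ht0 ((zchi_eq_one_iff hprim t).mp (by linear_combination h))
  · linear_combination h

lemma rank_span_singleton' {x : E} (hx : x ≠ 0) :
    Module.rank ℂ ↥(Submodule.span ℂ ({x} : Set E)) = 1 := by
  haveI := FiniteDimensional.span_singleton ℂ x
  rw [← Module.finrank_eq_rank, finrank_span_singleton hx, Nat.cast_one]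

/-- Contradiction from faithfulness: if a proper divisor pattern occurs in the supports,
the group is too small. -/
lemma faithful_contradiction (hprim : IsPrimitiveRoot ζ k)
    {wm wp : E ≃ₐ[ℂ] E} {R : E ≃ₐ[ℂ] E} (hRdef : R = wp * wm)
    (hRk : R ^ k = 1) (hconjm : wm * R = R⁻¹ * wm) (hconjp : wp * R = R⁻¹ * wp)
    (hm : wm * wm = 1) (hp : wp * wp = 1)
    (hRdeg : ∀ m : ℕ, ∀ x ∈ 𝒜 m, R x ∈ 𝒜 m)
    (hmdeg : ∀ m : ℕ, ∀ x ∈ 𝒜 m, wm x ∈ 𝒜 m) (hpdeg : ∀ m : ℕ, ∀ x ∈ 𝒜 m, wp x ∈ 𝒜 m)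
    (h0 : 𝒜 0 = 1) {pm pp : E} {nm np : ℕ}
    (hpm : pm ∈ 𝒜 (2*nm)) (hpp : pp ∈ 𝒜 (2*np)) (hnm : 1 ≤ nm) (hnp : 1 ≤ np)
    (hpme : wm pm = -pm) (hppe : wp pp = -pp)
    (hdm : ∀ a : E, ∃! bc : E × E,
      (wm bc.1 = bc.1 ∧ wm bc.2 = bc.2) ∧ a = bc.1 + pm * bc.2)
    (hdp : ∀ a : E, ∃! bc : E × E,
      (wp bc.1 = bc.1 ∧ wp bc.2 = bc.2) ∧ a = bc.1 + pp * bc.2)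
    {d : ℕ} (hdk : d ∣ k) (hd1 : 1 < d) {l0 m0 : ZMod k}
    (hl0d : d ∣ l0.val) (hm0d : d ∣ m0.val)
    (hvm : ∀ u : ZMod k, u ≠ l0 → u ≠ -l0 → piEig R ζ u pm = 0)
    (hvp : ∀ u : ZMod k, u ≠ m0 → u ≠ -m0 → piEig R ζ u pp = 0)
    (hfaithful : Nat.card ↥(Subgroup.closure ({wm, wp} : Set (E ≃ₐ[ℂ] E))) = 2 * k) :
    False := by
  have hk0 : 0 < k := Nat.pos_of_ne_zero (NeZero.ne k)
  have hsupp := support_dvd hprim hRdef hRk hconjm hconjp hm hp hRdeg hmdeg hpdeg h0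
    hpm hpp hnm hnp hpme hppe hdm hdp hdk hl0d hm0d hvm hvp
  have hRkd : R ^ (k / d) = 1 := by
    apply AlgEquiv.ext
    intro z
    have hhom : ∀ e : ℕ, ∀ x ∈ 𝒜 e, (R ^ (k/d)) x = x := by
      intro e x hx
      conv_lhs => rw [(piEig_sum hprim hRk x).symm]
      conv_rhs => rw [(piEig_sum hprim hRk x).symm]
      rw [map_sum]
      refine Finset.sum_congr rfl fun t _ => ?_
      by_cases h : piEig R ζ t x = 0
      · rw [h, map_zero]
      · have hdt : d ∣ t.val := by
          by_contra hc
          exact h (hsupp e t hc _ (piEig_mem_grading hRdeg t hx) (piEig_eig hprim hRk t x))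
        obtain ⟨mq, hmq⟩ := hdt
        rw [pow_apply_eig (piEig_eig hprim hRk t x)]
        have hone : zchi ζ t ^ (k/d) = 1 := by
          rw [zchi, ← pow_mul, hmq]
          have he : d * mq * (k / d) = k * mq := by
            rw [mul_comm d mq, mul_assoc, Nat.mul_div_cancel' hdk, mul_comm]
          rw [he, pow_mul, hprim.pow_eq_one, one_pow]
        rw [hone, one_smul]
    classical
    have hz := DirectSum.sum_support_decompose 𝒜 z
    calc (R ^ (k/d)) z = (R ^ (k/d)) (∑ e ∈ (DirectSum.decompose 𝒜 z).support,
          ((DirectSum.decompose 𝒜 z) e : E)) := by rw [hz]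
      _ = ∑ e ∈ (DirectSum.decompose 𝒜 z).support, (R ^ (k/d)) ((DirectSum.decompose 𝒜 z) e : E) :=
          map_sum _ _ _
      _ = ∑ e ∈ (DirectSum.decompose 𝒜 z).support, ((DirectSum.decompose 𝒜 z) e : E) :=
          Finset.sum_congr rfl fun e _ => hhom e _ (SetLike.coe_mem _)
      _ = (1 : E ≃ₐ[ℂ] E) z := by rw [hz, AlgEquiv.one_apply]
  have hkd0 : 0 < k / d := Nat.div_pos (Nat.le_of_dvd hk0 hdk) (by omega)
  rw [hRdef] at hRkd
  have hle := card_closure_le hm hp hkd0 hRkd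
  rw [hfaithful] at hle
  have hlt : k / d < k := Nat.div_lt_self hk0 hd1
  omega

end Main

section Final

variable {E : Type*} [CommRing E] [IsDomain E] [Algebra ℂ E]
variable {𝒜 : ℕ → Submodule ℂ E} [GradedAlgebra 𝒜]

lemma case_kge2 {k : ℕ} [NeZero k] {ζ : ℂ} (hprim : IsPrimitiveRoot ζ k) (hk2 : 2 ≤ k)
    (h0 : 𝒜 0 = 1) {wm wp : E ≃ₐ[ℂ] E}
    (hdeg : ∀ m : ℕ, ∀ x ∈ 𝒜 m, wm x ∈ 𝒜 m ∧ wp x ∈ 𝒜 m)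
    (hm : wm * wm = 1) (hp : wp * wp = 1) (hord : (wp * wm) ^ k = 1)
    (hfaithful : Nat.card ↥(Subgroup.closure ({wm, wp} : Set (E ≃ₐ[ℂ] E))) = 2 * k)
    {nm np : ℕ} (hnm : 1 ≤ nm) (hnp : 1 ≤ np)
    {pm pp : E} (hpm : pm ∈ 𝒜 (2 * nm)) (hpp : pp ∈ 𝒜 (2 * np))
    (hpmeig : wm pm = -pm) (hppeig : wp pp = -pp)
    (hdm : ∀ a : E, ∃! bc : E × E,
      (wm bc.1 = bc.1 ∧ wm bc.2 = bc.2) ∧ a = bc.1 + pm * bc.2)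
    (hdp : ∀ a : E, ∃! bc : E × E,
      (wp bc.1 = bc.1 ∧ wp bc.2 = bc.2) ∧ a = bc.1 + pp * bc.2) :
    (k = 2 ∧ wp (wm pp) = -pp ∧ wp (wm pm) = -pm) ∨
      TrichotomyCase3 𝒜 k nm np ζ wm wp pm pp := by
  haveI : NoZeroSMulDivisors ℂ E := noZeroSMul
  have hk0 : 0 < k := by omega
  set R := wp * wm with hRdef
  have hRinv : R⁻¹ = wm * wp := by
    apply inv_eq_of_mul_eq_one_right
    rw [hRdef, mul_assoc, ← mul_assoc wm wm, hm, one_mul, hp]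
  have hconjm : wm * R = R⁻¹ * wm := by rw [hRinv, hRdef, mul_assoc]
  have hconjp : wp * R = R⁻¹ * wp := by
    rw [hRinv, hRdef, ← mul_assoc, hp, one_mul, mul_assoc, hp, mul_one]
  have hmdeg : ∀ m : ℕ, ∀ x ∈ 𝒜 m, wm x ∈ 𝒜 m := fun m x hx => (hdeg m x hx).1
  have hpdeg : ∀ m : ℕ, ∀ x ∈ 𝒜 m, wp x ∈ 𝒜 m := fun m x hx => (hdeg m x hx).2
  have hRdeg : ∀ m : ℕ, ∀ x ∈ 𝒜 m, R x ∈ 𝒜 m := by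
    intro m x hx
    rw [hRdef, AlgEquiv.mul_apply]
    exact hpdeg _ _ (hmdeg _ _ hx)
  have hRk : R ^ k = 1 := hord
  have hRapp : ∀ z : E, R z = wp (wm z) := by
    intro z
    rw [hRdef, AlgEquiv.mul_apply]
  obtain ⟨l0, qm, hqm0, hqmA, hqmE, hpmq, hvm, hgenm, hselfm⟩ :=
    exists_q hprim hRk hconjm hm hRdeg h0 hpm hpmeig hdm
  obtain ⟨m0, qp, hqp0, hqpA, hqpE, hppq, hvp, hgenp, hselfp⟩ :=
    exists_q hprim hRk hconjp hp hRdeg h0 hpp hppeig hdp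
  have hpm0 : pm ≠ 0 := p_ne_zero hdm
  have hpp0 : pp ≠ 0 := p_ne_zero hdp
  by_cases hsl : l0 = -l0
  · by_cases hsm : m0 = -m0
    · -- both self-paired
      obtain ⟨hRpm, hwmqm⟩ := hselfm hsl
      obtain ⟨hRpp, hwpqp⟩ := hselfp hsm
      by_cases hl00 : l0 = 0
      · by_cases hm00 : m0 = 0
        · -- (0,0) : faithful contradiction with d = k
          exfalso
          refine faithful_contradiction hprim hRdef hRk hconjm hconjp hm hp hRdeg hmdeg hpdeg
            h0 hpm hpp hnm hnp hpmeig hppeig hdm hdp (dvd_refl k) (by omega)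
            (l0 := l0) (m0 := m0) ?_ ?_ hvm hvp hfaithful
          · rw [hl00, ZMod.val_zero]; exact dvd_zero k
          · rw [hm00, ZMod.val_zero]; exact dvd_zero k
        · -- l0 = 0, m0 ≠ 0 : unit contradiction
          exfalso
          have hchim : zchi ζ m0 = -1 := zchi_selfpair hprim hsm hm00
          have hRpm1 : R pm = pm := by rw [hRpm, hl00, zchi_zero hprim, one_smul]
          have hwppm : wp pm = -pm := by
            have h1 : wp pm = R (wm pm) := by rw [hRapp, invol_apply hm]
            rw [h1, hpmeig, map_neg, hRpm1]
          rcases anti_homog hp hppeig hdp hpp hpm hwppm with h | ⟨c, hcA, hpmc, hle⟩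
          · exact hpm0 h
          have hwmpp : wm pp = pp := by
            have h1 : wp (wm pp) = -pp := by
              rw [← hRapp, hRpp, hchim, neg_one_smul]
            have h2 := invol_apply hp (wm pp)
            rw [h1, map_neg, hppeig, neg_neg] at h2
            exact h2.symm
          have hwmc : wm c = -c := by
            have h1 := congrArg wm hpmc
            rw [hpmeig, map_mul, hwmpp] at h1
            have h2 : pp * (wm c + c) = 0 := by
              rw [mul_add, ← h1, ← hpmc]; ring
            rcases mul_eq_zero.mp h2 with h | h
            · exact absurd h hpp0
            · exact eq_neg_of_add_eq_zero_left h
          rcases anti_homog hm hpmeig hdm hpm hcA hwmc with h | ⟨c2, _, _, hle2⟩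
          · rw [h, mul_zero] at hpmc; exact hpm0 hpmc
          · omega
      · by_cases hm00 : m0 = 0
        · -- m0 = 0, l0 ≠ 0 : symmetric unit contradiction
          exfalso
          have hchil : zchi ζ l0 = -1 := zchi_selfpair hprim hsl hl00
          have hRpp1 : R pp = pp := by rw [hRpp, hm00, zchi_zero hprim, one_smul]
          have hwmpp : wm pp = -pp := by
            have h1 : wp (wm pp) = pp := by rw [← hRapp, hRpp1]
            have h2 := invol_apply hp (wm pp)
            rw [h1] at h2
            rw [hppeig] at h2
            exact h2.symm
          rcases anti_homog hm hpmeig hdm hpm hpp hwmpp with h | ⟨c, hcA, hppc, hle⟩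
          · exact hpp0 h
          have hwppm : wp pm = pm := by
            have h1 : wp (wm pm) = -pm := by
              rw [← hRapp, hRpm, hchil, neg_one_smul]
            rw [hpmeig, map_neg] at h1
            exact neg_injective h1
          have hwpc : wp c = -c := by
            have h1 := congrArg wp hppc
            rw [hppeig, map_mul, hwppm] at h1
            have h2 : pm * (wp c + c) = 0 := by rw [mul_add, ← h1, ← hppc]; ring
            rcases mul_eq_zero.mp h2 with h | h
            · exact absurd h hpm0
            · exact eq_neg_of_add_eq_zero_left h
          rcases anti_homog hp hppeig hdp hpp hcA hwpc with h | ⟨c2, _, _, hle2⟩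
          · rw [h, mul_zero] at hppc; exact hpp0 hppc
          · omega
        · -- both nonzero, both self-paired
          have hval : ∀ t : ZMod k, t = -t → t ≠ 0 → 2 * t.val = k := by
            intro t ht ht0
            have h1 : t.val = (-t).val := by rw [← ht]
            rw [ZMod.neg_val, if_neg ht0] at h1
            have h2 : t.val < k := ZMod.val_lt t
            have h3 : 0 < t.val := by
              rcases Nat.eq_zero_or_pos t.val with h | h
              · exact absurd ((ZMod.val_eq_zero t).mp h) ht0
              · exact h
            omega
          have hlv := hval l0 hsl hl00
          have hmv := hval m0 hsm hm00
          by_cases hk2' : k = 2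
          · left
            have hchim : zchi ζ m0 = -1 := zchi_selfpair hprim hsm hm00
            have hchil : zchi ζ l0 = -1 := zchi_selfpair hprim hsl hl00
            refine ⟨hk2', ?_, ?_⟩
            · rw [← hRapp, hRpp, hchim, neg_one_smul]
            · rw [← hRapp, hRpm, hchil, neg_one_smul]
          · exfalso
            have hlm : l0.val = m0.val := by omega
            have hdk : l0.val ∣ k := ⟨2, by omega⟩
            exact faithful_contradiction hprim hRdef hRk hconjm hconjp hm hp hRdeg hmdeg
              hpdeg h0 hpm hpp hnm hnp hpmeig hppeig hdm hdp hdk (by omega)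
              (dvd_refl _) (by rw [← hlm]) hvm hvp hfaithful
    · -- l0 self-paired, m0 not : descent kills qp
      exfalso
      exact hqp0 (descent hprim hRk hconjm hm hRdeg hmdeg h0 hpm hnm hpmeig hdm
        (hselfm hsl).1 hsl (2*np) m0 hsm qp hqpA hqpE)
  · by_cases hsm : m0 = -m0
    · exfalso
      exact hqm0 (descent hprim hRk hconjp hp hRdeg hpdeg h0 hpp hnp hppeig hdp
        (hselfp hsm).1 hsm (2*nm) l0 hsl qm hqmA hqmE)
    · -- both non-self-paired : Case 3
      right
      have hmain : ∀ (t0 : ZMod k) (q : E), q ≠ 0 → q ∈ 𝒜 (2*nm) →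
          R q = zchi ζ t0 • q → pm = q - wm q →
          piEig R ζ t0 pm = q → piEig R ζ (-t0) pm = -wm q →
          (∀ u : ZMod k, u ≠ t0 → u ≠ -t0 → piEig R ζ u pm = 0) →
          t0 ≠ -t0 → 2 * t0.val < k →
          TrichotomyCase3 𝒜 k nm np ζ wm wp pm pp := by
        intro t0 q hq0 hqA hqE hpmq' hgen1 hgen2 hvm' hns hrep
        have hwpq : R (wp q) = zchi ζ (-t0) • wp q := by
          rw [zchi_neg hprim]
          exact conj_eig hconjp hqE (zchi_ne_zero hprim t0)
        have hx_anti : wp (q - wp q) = -(q - wp q) := by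
          rw [map_sub, invol_apply hp]; ring
        have hxA : q - wp q ∈ 𝒜 (2*nm) := sub_mem hqA (hpdeg _ _ hqA)
        have hπx : piEig R ζ t0 (q - wp q) = q := by
          rw [map_sub, piEig_of_eig hprim _ hqE, if_pos rfl, piEig_of_eig hprim _ hwpq,
            if_neg hns, sub_zero]
        have hx0 : q - wp q ≠ 0 := fun h => hq0 (by rw [← hπx, h, map_zero])
        rcases anti_homog hp hppeig hdp hpp hxA hx_anti with h | ⟨dd, hddA, hxd, hled⟩
        · exact absurd h hx0
        have hwmqp : R (wm qp) = zchi ζ (-m0) • wm qp := by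
          rw [zchi_neg hprim]
          exact conj_eig hconjm hqpE (zchi_ne_zero hprim m0)
        have hy_anti : wm (qp - wm qp) = -(qp - wm qp) := by
          rw [map_sub, invol_apply hm]; ring
        have hyA : qp - wm qp ∈ 𝒜 (2*np) := sub_mem hqpA (hmdeg _ _ hqpA)
        have hπy : piEig R ζ m0 (qp - wm qp) = qp := by
          rw [map_sub, piEig_of_eig hprim _ hqpE, if_pos rfl, piEig_of_eig hprim _ hwmqp,
            if_neg hsm, sub_zero]
        have hy0 : qp - wm qp ≠ 0 := fun h => hqp0 (by rw [← hπy, h, map_zero])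
        rcases anti_homog hm hpmeig hdm hpm hyA hy_anti with h | ⟨ee, heeA, hye, hlee⟩
        · exact absurd h hy0
        have hnn : np = nm := by omega
        have h2np : 2 * np = 2 * nm := by omega
        have hdd0 : dd ∈ 𝒜 0 := by rwa [show 2*nm - 2*np = 0 by omega] at hddA
        obtain ⟨δ, hδ⟩ := mem_deg0 h0 hdd0
        have hxδ : q - wp q = δ • pp := by
          rw [hxd, hδ, mul_comm, ← Algebra.smul_def]
        have hδ0 : δ ≠ 0 := fun h => hx0 (by rw [hxδ, h, zero_smul])
        have hm0l : m0 = t0 ∨ m0 = -t0 := by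
          by_contra hc
          push_neg at hc
          have h1 : piEig R ζ m0 (q - wp q) = 0 := by
            rw [map_sub, piEig_of_eig hprim _ hqE, if_neg hc.1,
              piEig_of_eig hprim _ hwpq, if_neg hc.2, sub_zero]
          rw [hxδ, map_smul, (hgenp hsm).1] at h1
          rcases smul_eq_zero.mp h1 with h | h
          · exact hδ0 h
          · exact hqp0 h
        have ht00 : t0 ≠ 0 := fun h => hns (by rw [h, neg_zero])
        have hv0 : 0 < t0.val := by
          rcases Nat.eq_zero_or_pos t0.val with h | h
          · exact absurd ((ZMod.val_eq_zero t0).mp h) ht00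
          · exact h
        have hgcd : Nat.gcd t0.val k = 1 := by
          by_contra hg
          set d := Nat.gcd (Nat.gcd t0.val m0.val) k with hd
          have hdvk : d ∣ k := Nat.gcd_dvd_right _ _
          have hgl : Nat.gcd t0.val k ∣ d := by
            refine Nat.dvd_gcd (Nat.dvd_gcd (Nat.gcd_dvd_left _ _) ?_) (Nat.gcd_dvd_right _ _)
            rcases hm0l with h | h
            · rw [h]; exact Nat.gcd_dvd_left _ _
            · rw [h, ZMod.neg_val, if_neg ht00]
              exact Nat.dvd_sub (Nat.gcd_dvd_right _ _) (Nat.gcd_dvd_left _ _)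
          have hd0 : d ≠ 0 := by
            intro h
            rw [hd] at h
            exact hk0.ne' (Nat.eq_zero_of_gcd_eq_zero_right h)
          have hd1 : 1 < d := by
            have h2 : Nat.gcd t0.val k ≤ d := Nat.le_of_dvd (Nat.pos_of_ne_zero hd0) hgl
            have h3 : Nat.gcd t0.val k ≠ 0 := fun h =>
              hk0.ne' (Nat.eq_zero_of_gcd_eq_zero_right h)
            omega
          exact faithful_contradiction hprim hRdef hRk hconjm hconjp hm hp hRdeg hmdeg hpdeg
            h0 hpm hpp hnm hnp hpmeig hppeig hdm hdp hdvk hd1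
            (dvd_trans (Nat.gcd_dvd_left _ _) (Nat.gcd_dvd_left _ _))
            (dvd_trans (Nat.gcd_dvd_left _ _) (Nat.gcd_dvd_right _ _)) hvm' hvp hfaithful
        have hcast : ((t0.val : ℕ) : ZMod k) = t0 := ZMod.natCast_rightInverse t0
        have hζv : ζ ^ ((t0.val : ℕ) : ℤ) = zchi ζ t0 := by
          rw [zpow_natCast, ← zchi_natCast hprim t0.val, hcast]
        have hζvneg : ζ ^ (-((t0.val : ℕ) : ℤ)) = zchi ζ (-t0) := by
          rw [zpow_neg, hζv, zchi_neg hprim]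
        have hker : ∀ (ℓ : ℤ) (z : E),
            z ∈ rEig (wp * wm : E ≃ₐ[ℂ] E).toLinearMap ζ ℓ ↔ R z = ζ ^ ℓ • z := by
          intro ℓ z
          simp only [rEig, LinearMap.mem_ker, LinearMap.sub_apply, LinearMap.smul_apply,
            Module.End.one_apply, AlgEquiv.toLinearMap_apply, sub_eq_zero, ← hRdef]
        have hwmq0 : wm q ≠ 0 := by
          intro h
          have h2 := congrArg wm h
          rw [invol_apply hm, map_zero] at h2
          exact hq0 h2
        have hwmqA : wm q ∈ 𝒜 (2*nm) := hmdeg _ _ hqA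
        have hwmqE : R (wm q) = zchi ζ (-t0) • wm q := by
          rw [zchi_neg hprim]
          exact conj_eig hconjm hqE (zchi_ne_zero hprim t0)
        have hspan1 : rEig (wp * wm : E ≃ₐ[ℂ] E).toLinearMap ζ ((t0.val : ℕ) : ℤ) ⊓ 𝒜 (2 * np)
            = Submodule.span ℂ {q} := by
          apply le_antisymm
          · rintro z hz
            obtain ⟨hz1, hz2⟩ := Submodule.mem_inf.mp hz
            have hzE : R z = zchi ζ t0 • z := by
              rw [← hζv]
              exact (hker _ z).mp hz1
            have hz2' : z ∈ 𝒜 (2*nm) := by rwa [h2np] at hz2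
            have hzwm : R (wm z) = zchi ζ (-t0) • wm z := by
              rw [zchi_neg hprim]
              exact conj_eig hconjm hzE (zchi_ne_zero hprim t0)
            have hza : wm (z - wm z) = -(z - wm z) := by
              rw [map_sub, invol_apply hm]; ring
            obtain ⟨lam, hlam⟩ := anti_homog_same_deg h0 hm hpmeig hdm hpm
              (sub_mem hz2' (hmdeg _ _ hz2')) hza
            have hπz : piEig R ζ t0 (z - wm z) = z := by
              rw [map_sub, piEig_of_eig hprim _ hzE, if_pos rfl,
                piEig_of_eig hprim _ hzwm, if_neg hns, sub_zero]
            have hzq : z = lam • q := by rw [← hπz, hlam, map_smul, hgen1]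
            exact Submodule.mem_span_singleton.mpr ⟨lam, hzq.symm⟩
          · rw [Submodule.span_le, Set.singleton_subset_iff]
            refine Submodule.mem_inf.mpr ⟨(hker _ q).mpr ?_, by rwa [h2np]⟩
            rw [hζv]; exact hqE
        have hspan2 : rEig (wp * wm : E ≃ₐ[ℂ] E).toLinearMap ζ (-((t0.val : ℕ) : ℤ)) ⊓ 𝒜 (2 * np)
            = Submodule.span ℂ {wm q} := by
          apply le_antisymm
          · rintro z hz
            obtain ⟨hz1, hz2⟩ := Submodule.mem_inf.mp hz
            have hzE : R z = zchi ζ (-t0) • z := by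
              rw [← hζvneg]
              exact (hker _ z).mp hz1
            have hz2' : z ∈ 𝒜 (2*nm) := by rwa [h2np] at hz2
            have hzwm : R (wm z) = zchi ζ t0 • wm z := by
              have h1 := conj_eig hconjm hzE (zchi_ne_zero hprim (-t0))
              rwa [zchi_neg hprim, inv_inv] at h1
            have hza : wm (z - wm z) = -(z - wm z) := by
              rw [map_sub, invol_apply hm]; ring
            obtain ⟨lam, hlam⟩ := anti_homog_same_deg h0 hm hpmeig hdm hpm
              (sub_mem hz2' (hmdeg _ _ hz2')) hza
            have hπz : piEig R ζ (-t0) (z - wm z) = z := by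
              rw [map_sub, piEig_of_eig hprim _ hzE, if_pos rfl,
                piEig_of_eig hprim _ hzwm, if_neg (Ne.symm hns), sub_zero]
            have hzq : z = (-lam) • wm q := by
              rw [← hπz, hlam, map_smul, hgen2, smul_neg, neg_smul]
            exact Submodule.mem_span_singleton.mpr ⟨-lam, hzq.symm⟩
          · rw [Submodule.span_le, Set.singleton_subset_iff]
            refine Submodule.mem_inf.mpr ⟨(hker _ (wm q)).mpr ?_, by rwa [h2np]⟩
            rw [hζvneg]; exact hwmqE
        unfold TrichotomyCase3
        refine ⟨hk2, hnn, t0.val, hv0, hrep, hgcd, q, δ, 1, by rwa [h2np], ?_, hδ0,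
          one_ne_zero, hxδ.symm, ?_, ?_, ?_⟩
        · exact (hker _ q).mpr (by rw [hζv]; exact hqE)
        · rw [one_smul, hpmq']
        · rw [hspan1]
          exact rank_span_singleton' hq0
        · rw [hspan2]
          exact rank_span_singleton' hwmq0
      by_cases hrep : 2 * l0.val < k
      · exact hmain l0 qm hqm0 hqmA hqmE hpmq (hgenm hsl).1 (hgenm hsl).2 hvm hsl hrep
      · have hl0ne : l0 ≠ 0 := fun h => hsl (by rw [h, neg_zero])
        have hvneg : (-l0).val = k - l0.val := by rw [ZMod.neg_val, if_neg hl0ne]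
        have h2v : 2 * l0.val ≠ k := by
          intro h
          apply hsl
          have hval_eq : l0.val = (-l0).val := by omega
          have h1 := congrArg (fun x : ℕ => (x : ZMod k)) hval_eq
          rwa [ZMod.natCast_rightInverse l0, ZMod.natCast_rightInverse (-l0)] at h1
        have hrep' : 2 * (-l0).val < k := by
          have h1 : l0.val < k := ZMod.val_lt l0
          omega
        have hq0' : -wm qm ≠ 0 := by
          simp only [ne_eq, neg_eq_zero]
          intro h
          have h2 := congrArg wm h
          rw [invol_apply hm, map_zero] at h2
          exact hqm0 h2
        have hqA' : -wm qm ∈ 𝒜 (2*nm) := neg_mem (hmdeg _ _ hqmA)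
        have hqE' : R (-wm qm) = zchi ζ (-l0) • (-wm qm) := by
          rw [map_neg, smul_neg]
          congr 1
          rw [zchi_neg hprim]
          exact conj_eig hconjm hqmE (zchi_ne_zero hprim l0)
        have hpmq'' : pm = (-wm qm) - wm (-wm qm) := by
          rw [map_neg, invol_apply hm, sub_neg_eq_add, hpmq]; ring
        have hgen2' : piEig R ζ (-(-l0)) pm = -wm (-wm qm) := by
          rw [neg_neg, map_neg, invol_apply hm, neg_neg, (hgenm hsl).1]
        have hvm'' : ∀ u : ZMod k, u ≠ -l0 → u ≠ -(-l0) → piEig R ζ u pm = 0 := by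
          intro u h1 h2
          rw [neg_neg] at h2
          exact hvm u h2 h1
        have hns' : -l0 ≠ -(-l0) := by rw [neg_neg]; exact Ne.symm hsl
        exact hmain (-l0) (-wm qm) hq0' hqA' hqE' hpmq'' (hgenm hsl).2 hgen2' hvm'' hns' hrep'

lemma case_k1 (h0 : 𝒜 0 = 1) {wm wp : E ≃ₐ[ℂ] E}
    (hm : wm * wm = 1) (hp : wp * wp = 1) (hord1 : wp * wm = 1)
    {nm np : ℕ} {pm pp : E} (hpm : pm ∈ 𝒜 (2 * nm)) (hpp : pp ∈ 𝒜 (2 * np))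
    (hpmeig : wm pm = -pm) (hppeig : wp pp = -pp)
    (hdm : ∀ a : E, ∃! bc : E × E,
      (wm bc.1 = bc.1 ∧ wm bc.2 = bc.2) ∧ a = bc.1 + pm * bc.2)
    (hdp : ∀ a : E, ∃! bc : E × E,
      (wp bc.1 = bc.1 ∧ wp bc.2 = bc.2) ∧ a = bc.1 + pp * bc.2) :
    np = nm ∧ ∃ c : ℂ, c ≠ 0 ∧ pp = c • pm := by
  have hwpm : wp = wm := by
    calc wp = wp * (wm * wm) := by rw [hm, mul_one]
    _ = (wp * wm) * wm := by rw [mul_assoc]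
    _ = wm := by rw [hord1, one_mul]
  have hwm_pp : wm pp = -pp := by rw [← hwpm]; exact hppeig
  have hwp_pm : wp pm = -pm := by rw [hwpm]; exact hpmeig
  have hpm0 : pm ≠ 0 := p_ne_zero hdm
  have hpp0 : pp ≠ 0 := p_ne_zero hdp
  rcases anti_homog hm hpmeig hdm hpm hpp hwm_pp with h | ⟨c, hcA, hppc, hlec⟩
  · exact absurd h hpp0
  rcases anti_homog hp hppeig hdp hpp hpm hwp_pm with h | ⟨d, hdA, hpmd, hled⟩
  · exact absurd h hpm0
  have hnn : np = nm := by omega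
  have hc0 : c ∈ 𝒜 0 := by rwa [show 2*np - 2*nm = 0 by omega] at hcA
  obtain ⟨lam, hlam⟩ := mem_deg0 h0 hc0
  have hppl : pp = lam • pm := by rw [hppc, hlam, mul_comm, ← Algebra.smul_def]
  have hlam0 : lam ≠ 0 := fun h => hpp0 (by rw [hppl, h, zero_smul])
  exact ⟨hnn, lam, hlam0, hppl⟩

end Final

end Stmt10Aux

open Stmt10Aux

/-- Let `k ≥ 1` and let `E = ⊕_{m ≥ 0} E^m` be a
nonnegatively graded commutative `ℂ`-algebra which is an integral domain with
`E^0 = ℂ`.  Let `wm, wp` ("w₋", "w₊") be degree-preserving `ℂ`-algebra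
automorphisms of `E` with `w₋² = w₊² = id` and `(w₊w₋)^k = id`, generating a
subgroup of order exactly `2k` (a faithful dihedral action); set `r = w₊w₋`
and `ζ = e^{2πi/k}`.  Suppose given integers `n₋, n₊ ≥ 1` and homogeneous
elements `p₋ ∈ E^{2n₋}`, `p₊ ∈ E^{2n₊}` with `w₋ p₋ = -p₋`, `w₊ p₊ = -p₊`,
such that `E = E^{w₋} ⊕ p₋E^{w₋}` and `E = E^{w₊} ⊕ p₊E^{w₊}`.  Then exactly
one of the three cases (i), (ii), (iii) holds. -/
theorem stmt10 {E : Type*} [CommRing E] [IsDomain E] [Algebra ℂ E]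
    (𝒜 : ℕ → Submodule ℂ E) [GradedAlgebra 𝒜]
    (h0 : 𝒜 0 = 1)
    (k : ℕ) (hk : 1 ≤ k)
    (wm wp : E ≃ₐ[ℂ] E)
    (hdeg : ∀ m : ℕ, ∀ x ∈ 𝒜 m, wm x ∈ 𝒜 m ∧ wp x ∈ 𝒜 m)
    (hm : wm * wm = 1) (hp : wp * wp = 1)
    (hord : (wp * wm) ^ k = 1)
    (hfaithful : Nat.card ↥(Subgroup.closure ({wm, wp} : Set (E ≃ₐ[ℂ] E))) = 2 * k)
    (ζ : ℂ) (hζ : ζ = Complex.exp (2 * Real.pi * Complex.I / k))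
    (nm np : ℕ) (hnm : 1 ≤ nm) (hnp : 1 ≤ np)
    (pm pp : E) (hpm : pm ∈ 𝒜 (2 * nm)) (hpp : pp ∈ 𝒜 (2 * np))
    (hpmeig : wm pm = -pm) (hppeig : wp pp = -pp)
    (hdm : ∀ a : E, ∃! bc : E × E,
      (wm bc.1 = bc.1 ∧ wm bc.2 = bc.2) ∧ a = bc.1 + pm * bc.2)
    (hdp : ∀ a : E, ∃! bc : E × E,
      (wp bc.1 = bc.1 ∧ wp bc.2 = bc.2) ∧ a = bc.1 + pp * bc.2) :
    (TrichotomyCase1 k nm np pm pp ∧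
      ¬TrichotomyCase2 k wm wp pm pp ∧
      ¬TrichotomyCase3 𝒜 k nm np ζ wm wp pm pp) ∨
    (¬TrichotomyCase1 k nm np pm pp ∧
      TrichotomyCase2 k wm wp pm pp ∧
      ¬TrichotomyCase3 𝒜 k nm np ζ wm wp pm pp) ∨
    (¬TrichotomyCase1 k nm np pm pp ∧
      ¬TrichotomyCase2 k wm wp pm pp ∧
      TrichotomyCase3 𝒜 k nm np ζ wm wp pm pp) := by
  haveI : NeZero k := ⟨by omega⟩
  have hprim : IsPrimitiveRoot ζ k := by
    rw [hζ]
    exact Complex.isPrimitiveRoot_exp k (by omega)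
  rcases Nat.lt_or_ge k 2 with hklt | hk2
  · -- k = 1
    have hk1 : k = 1 := by omega
    have hord1 : wp * wm = 1 := by rwa [hk1, pow_one] at hord
    obtain ⟨hnn, lam, hlam0, hppl⟩ := case_k1 h0 hm hp hord1 hpm hpp hpmeig hppeig hdm hdp
    left
    refine ⟨⟨hk1, hnn, lam, hlam0, hppl⟩, ?_, ?_⟩
    · intro h
      unfold TrichotomyCase2 at h
      omega
    · intro h
      unfold TrichotomyCase3 at h
      omega
  · rcases case_kge2 hprim hk2 h0 hdeg hm hp hord hfaithful hnm hnp hpm hpp hpmeig hppeig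
      hdm hdp with ⟨hk2', hcp, hcm⟩ | hc3
    · right; left
      refine ⟨?_, ⟨hk2', hcp, hcm⟩, ?_⟩
      · intro h
        unfold TrichotomyCase1 at h
        omega
      · intro h
        unfold TrichotomyCase3 at h
        obtain ⟨-, -, j, hj1, hj2, -⟩ := h
        omega
    · right; right
      refine ⟨?_, ?_, hc3⟩
      · intro h
        unfold TrichotomyCase1 at h
        unfold TrichotomyCase3 at hc3
        omega
      · intro h
        unfold TrichotomyCase2 at h
        unfold TrichotomyCase3 at hc3
        obtain ⟨-, -, j, hj1, hj2, -⟩ := hc3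
        omega
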